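/- For u(x) = c/(1 + b²|x|²)² on ℝ³ with b, c > 0, the convolution satisfies (u ∗ u)(x) = 2π²c²/(b³ (4 + b²|x|²)²) for all x. -/

import Mathlib

open MeasureTheory Real Filter Set Topology

lemma aux_inv_tsq {t : ℝ} {g : ℝ → ℝ} (ht : 0 < t) {l : Filter ℝ}
    (h : Tendsto (fun y : ℝ => |g y|) l atTop) :
    Tendsto (fun y : ℝ => (t^2 + (g y)^2)⁻¹) l (𝓝 0) := by
  apply squeeze_zero_norm' ?_ (tendsto_inv_atTop_zero.comp h)
  filter_upwards [h.eventually_ge_atTop 1] with y hy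
  have h0 : (0:ℝ) < |g y| := by linarith
  rw [Real.norm_eq_abs, abs_of_pos (by positivity), Function.comp_apply]
  rw [inv_le_inv₀ (by positivity) h0]
  nlinarith [sq_abs (g y), sq_nonneg t]

lemma aux_div_tsq {t : ℝ} {g : ℝ → ℝ} (ht : 0 < t) {l : Filter ℝ}
    (h : Tendsto (fun y : ℝ => |g y|) l atTop) :
    Tendsto (fun y : ℝ => (g y)/(t^2 + (g y)^2)) l (𝓝 0) := by
  apply squeeze_zero_norm' ?_ (tendsto_inv_atTop_zero.comp h)
  filter_upwards [h.eventually_ge_atTop 1] with y hy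
  have h0 : (0:ℝ) < |g y| := by linarith
  rw [Real.norm_eq_abs, abs_div, abs_of_pos (by positivity : (0:ℝ) < t^2+(g y)^2),
    Function.comp_apply, div_le_iff₀ (by positivity), ← one_div, div_mul_eq_mul_div,
    le_div_iff₀ h0]
  nlinarith [sq_abs (g y), sq_nonneg t]

lemma aux_abs_sub_atTop (a : ℝ) : Tendsto (fun y : ℝ => |y - a|) atTop atTop :=
  tendsto_abs_atTop_atTop.comp (tendsto_atTop_add_const_right _ (-a) tendsto_id)

lemma aux_abs_sub_atBot (a : ℝ) : Tendsto (fun y : ℝ => |y - a|) atBot atTop :=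
  tendsto_abs_atBot_atTop.comp (tendsto_atBot_add_const_right _ (-a) tendsto_id)

lemma aux_arctan_atTop {t : ℝ} (a : ℝ) (ht : 0 < t) :
    Tendsto (fun y : ℝ => arctan ((y - a)/t)) atTop (𝓝 (π/2)) :=
  (Real.tendsto_arctan_atTop.mono_right nhdsWithin_le_nhds).comp
    ((tendsto_atTop_add_const_right _ (-a) tendsto_id).atTop_div_const ht)

lemma aux_arctan_atBot {t : ℝ} (a : ℝ) (ht : 0 < t) :
    Tendsto (fun y : ℝ => arctan ((y - a)/t)) atBot (𝓝 (-(π/2))) :=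
  (Real.tendsto_arctan_atBot.mono_right nhdsWithin_le_nhds).comp
    ((tendsto_atBot_add_const_right _ (-a) tendsto_id).atBot_div_const ht)

lemma aux_arctan_atTop' {t : ℝ} (ht : 0 < t) :
    Tendsto (fun y : ℝ => arctan (y/t)) atTop (𝓝 (π/2)) := by
  simpa using aux_arctan_atTop 0 ht

lemma aux_arctan_atBot' {t : ℝ} (ht : 0 < t) :
    Tendsto (fun y : ℝ => arctan (y/t)) atBot (𝓝 (-(π/2))) := by
  simpa using aux_arctan_atBot 0 ht

noncomputable def FK (t a y : ℝ) : ℝ :=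
  (-2*(4*t^2+a^2+4*a^2)/(a^3*(4*t^2+a^2)^3)) * (Real.log (t^2+(y-a)^2) - Real.log (t^2+y^2))
  + (2/(a*(4*t^2+a^2)^2)) * ((t^2+(y-a)^2)⁻¹ - (t^2+y^2)⁻¹)
  + ((4*t^2+a^2+16*t^2)/(2*t^3*(4*t^2+a^2)^3)) * (arctan ((y-a)/t) + arctan (y/t))
  + ((a^2-4*t^2)/(2*t^2*a^2*(4*t^2+a^2)^2)) * ((y-a)/(t^2+(y-a)^2) + y/(t^2+y^2))

lemma aux_log_tendsto {t a : ℝ} (ht : 0 < t) {l : Filter ℝ}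
    (habs : Tendsto (fun y : ℝ => |y|) l atTop) :
    Tendsto (fun y : ℝ => Real.log (t^2+(y-a)^2) - Real.log (t^2+y^2)) l (𝓝 0) := by
  have hg : Tendsto (fun y : ℝ => 1 + (a^2*(t^2+y^2)⁻¹ - 2*a*(y/(t^2+y^2)))) l (𝓝 1) := by
    have h1 := (aux_inv_tsq (g := fun y : ℝ => y) ht habs).const_mul (a^2)
    have h2 := (aux_div_tsq (g := fun y : ℝ => y) ht habs).const_mul (2*a)
    have := (tendsto_const_nhds (x := (1:ℝ)) (f := l)).add (h1.sub h2)
    simpa using this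
  have hlog := (Real.continuousAt_log one_ne_zero).tendsto.comp hg
  rw [Real.log_one] at hlog
  apply hlog.congr
  intro y
  have hB : (0:ℝ) < t^2+y^2 := by positivity
  have hA : (0:ℝ) < t^2+(y-a)^2 := by positivity
  have key : (1 + (a^2*(t^2+y^2)⁻¹ - 2*a*(y/(t^2+y^2)))) = (t^2+(y-a)^2)/(t^2+y^2) := by
    field_simp; ring
  rw [Function.comp_apply, key, Real.log_div hA.ne' hB.ne']

lemma aux_FK_tendsto {t a : ℝ} (ht : 0 < t) {l : Filter ℝ} (L : ℝ)
    (habs : Tendsto (fun y : ℝ => |y|) l atTop)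
    (habs' : Tendsto (fun y : ℝ => |y - a|) l atTop)
    (harc : Tendsto (fun y : ℝ => arctan ((y-a)/t)) l (𝓝 L))
    (harc' : Tendsto (fun y : ℝ => arctan (y/t)) l (𝓝 L)) :
    Tendsto (fun y : ℝ => FK t a y)
      l (𝓝 (((4*t^2+a^2+16*t^2)/(2*t^3*(4*t^2+a^2)^3)) * (2*L))) := by
  have h1 := (aux_log_tendsto (a := a) ht habs).const_mul
    (-2*(4*t^2+a^2+4*a^2)/(a^3*(4*t^2+a^2)^3))
  have h2 := ((aux_inv_tsq (g := fun y : ℝ => y - a) ht habs').sub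
    (aux_inv_tsq (g := fun y : ℝ => y) ht habs)).const_mul (2/(a*(4*t^2+a^2)^2))
  have h3 := (harc.add harc').const_mul ((4*t^2+a^2+16*t^2)/(2*t^3*(4*t^2+a^2)^3))
  have h4 := ((aux_div_tsq (g := fun y : ℝ => y - a) ht habs').add
    (aux_div_tsq (g := fun y : ℝ => y) ht habs)).const_mul
    ((a^2-4*t^2)/(2*t^2*a^2*(4*t^2+a^2)^2))
  have big := ((h1.add h2).add h3).add h4
  simp only [FK]
  convert big using 2
  ring

noncomputable def FK0 (t y : ℝ) : ℝ :=
  y/(6*t^2*(t^2+y^2)^3) + 5*y/(24*t^4*(t^2+y^2)^2) + 5*y/(16*t^6*(t^2+y^2))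
  + 5/(16*t^7) * arctan (y/t)

lemma aux_FK0_tendsto {t : ℝ} (ht : 0 < t) {l : Filter ℝ} (L : ℝ)
    (habs : Tendsto (fun y : ℝ => |y|) l atTop)
    (harc : Tendsto (fun y : ℝ => arctan (y/t)) l (𝓝 L)) :
    Tendsto (fun y : ℝ => FK0 t y) l (𝓝 (5/(16*t^7) * L)) := by
  have hd := aux_div_tsq (g := fun y : ℝ => y) ht habs
  have hi := aux_inv_tsq (g := fun y : ℝ => y) ht habs
  have h1 : Tendsto (fun y : ℝ => y/(6*t^2*(t^2+y^2)^3)) l (𝓝 0) := by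
    have h := ((hd.mul hi).mul hi).const_mul (6*t^2)⁻¹
    simp only [mul_zero, zero_mul] at h
    apply Tendsto.congr' ?_ h
    filter_upwards with y
    have hB : (0:ℝ) < t^2+y^2 := by positivity
    field_simp
    try ring
    try tauto
  have h2 : Tendsto (fun y : ℝ => 5*y/(24*t^4*(t^2+y^2)^2)) l (𝓝 0) := by
    have h := (hd.mul hi).const_mul (5*(24*t^4)⁻¹)
    simp only [mul_zero, zero_mul] at h
    apply Tendsto.congr' ?_ h
    filter_upwards with y
    have hB : (0:ℝ) < t^2+y^2 := by positivity
    field_simp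
    try ring
    try tauto
  have h3 : Tendsto (fun y : ℝ => 5*y/(16*t^6*(t^2+y^2))) l (𝓝 0) := by
    have h := hd.const_mul (5*(16*t^6)⁻¹)
    simp only [mul_zero, zero_mul] at h
    apply Tendsto.congr' ?_ h
    filter_upwards with y
    have hB : (0:ℝ) < t^2+y^2 := by positivity
    field_simp
    try ring
    try tauto
  have big := ((h1.add h2).add h3).add (harc.const_mul (5/(16*t^7)))
  simp only [FK0]
  convert big using 2
  ring


lemma hasDerivAt_FK {t a : ℝ} (ht : 0 < t) (ha : a ≠ 0) (y : ℝ) :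
    HasDerivAt (fun y : ℝ => FK t a y)
      (((t^2+(y-a)^2)^2 * (t^2+y^2)^2)⁻¹) y := by
  simp only [FK]
  have hA : 0 < t^2+(y-a)^2 := by positivity
  have hB : 0 < t^2+y^2 := by positivity
  have hQ : (4*t^2+a^2) ≠ 0 := by positivity
  have dA : HasDerivAt (fun y : ℝ => t^2+(y-a)^2) (2*(y-a)) y := by
    simpa using (((hasDerivAt_id y).sub_const a).pow 2).const_add (t^2)
  have dB : HasDerivAt (fun y : ℝ => t^2+y^2) (2*y) y := by
    simpa using ((hasDerivAt_id y).pow 2).const_add (t^2)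
  have darctanA : HasDerivAt (fun y : ℝ => arctan ((y-a)/t))
      ((1/(1+((y-a)/t)^2)) * (1/t)) y := by
    have := (Real.hasDerivAt_arctan ((y-a)/t)).comp y
      (((hasDerivAt_id y).sub_const a).div_const t)
    exact this
  have darctanB : HasDerivAt (fun y : ℝ => arctan (y/t))
      ((1/(1+(y/t)^2)) * (1/t)) y := by
    have := (Real.hasDerivAt_arctan (y/t)).comp y ((hasDerivAt_id y).div_const t)
    exact this
  have dfracA : HasDerivAt (fun y : ℝ => (y-a)/(t^2+(y-a)^2))
      ((1*(t^2+(y-a)^2) - (y-a)*(2*(y-a)))/(t^2+(y-a)^2)^2) y :=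
    ((hasDerivAt_id y).sub_const a).div dA hA.ne'
  have dfracB : HasDerivAt (fun y : ℝ => y/(t^2+y^2))
      ((1*(t^2+y^2) - y*(2*y))/(t^2+y^2)^2) y :=
    (hasDerivAt_id y).div dB hB.ne'
  have big := ((((dA.log hA.ne').sub (dB.log hB.ne')).const_mul
        (-2*(4*t^2+a^2+4*a^2)/(a^3*(4*t^2+a^2)^3))).add
      (((dA.inv hA.ne').sub (dB.inv hB.ne')).const_mul (2/(a*(4*t^2+a^2)^2)))).add
      (((darctanA.add darctanB).const_mul ((4*t^2+a^2+16*t^2)/(2*t^3*(4*t^2+a^2)^3))).add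
        ((dfracA.add dfracB).const_mul ((a^2-4*t^2)/(2*t^2*a^2*(4*t^2+a^2)^2))))
  convert big.add_const 0 using 1
  · rfl
  · rfl
  · ext y; simp only [Pi.add_apply, Pi.sub_apply, Pi.inv_apply]; ring
  · have h1 : (1+((y-a)/t)^2) = (t^2+(y-a)^2)/t^2 := by field_simp
    have h2 : (1+(y/t)^2) = (t^2+y^2)/t^2 := by field_simp
    rw [h1, h2]
    field_simp
    ring


lemma hasDerivAt_FK0 {t : ℝ} (ht : 0 < t) (y : ℝ) :
    HasDerivAt (fun y : ℝ => FK0 t y)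
      (((t^2+y^2)^2 * (t^2+y^2)^2)⁻¹) y := by
  simp only [FK0]
  have hB : 0 < t^2+y^2 := by positivity
  have dB : HasDerivAt (fun y : ℝ => t^2+y^2) (2*y) y := by
    simpa using ((hasDerivAt_id y).pow 2).const_add (t^2)
  have darctanB : HasDerivAt (fun y : ℝ => arctan (y/t))
      ((1/(1+(y/t)^2)) * (1/t)) y := by
    have := (Real.hasDerivAt_arctan (y/t)).comp y ((hasDerivAt_id y).div_const t)
    exact this
  have d1 : HasDerivAt (fun y : ℝ => 6*t^2*(t^2+y^2)^3) (6*t^2*(3*(t^2+y^2)^2*(2*y))) y :=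
    ((dB.pow 3).const_mul (6*t^2)).congr_deriv (by ring)
  have d2 : HasDerivAt (fun y : ℝ => 24*t^4*(t^2+y^2)^2) (24*t^4*(2*(t^2+y^2)*(2*y))) y :=
    ((dB.pow 2).const_mul (24*t^4)).congr_deriv (by ring)
  have d3 : HasDerivAt (fun y : ℝ => 16*t^6*(t^2+y^2)) (16*t^6*(2*y)) y :=
    (dB.const_mul (16*t^6)).congr_deriv (by ring)
  have big := ((((hasDerivAt_id y).div d1 (by positivity)).add
      (((hasDerivAt_id y).const_mul 5).div d2 (by positivity))).add
      ((((hasDerivAt_id y).const_mul 5).div d3 (by positivity)).add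
        (darctanB.const_mul (5/(16*t^7)))))
  convert big using 1
  · rfl
  · rfl
  · ext z; simp only [id_eq, Pi.add_apply, Pi.div_apply]; ring
  · have h2 : (1+(y/t)^2) = (t^2+y^2)/t^2 := by field_simp
    rw [h2, id_eq]
    field_simp
    ring

-- integrability of the 1D integrand
lemma integrable_K {t a : ℝ} (ht : 0 < t) :
    Integrable (fun y : ℝ => ((t^2+(y-a)^2)^2 * (t^2+y^2)^2)⁻¹) := by
  have hcont : Continuous (fun y : ℝ => ((t^2+(y-a)^2)^2 * (t^2+y^2)^2)⁻¹) := by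
    apply Continuous.inv₀ (by continuity)
    intro y; positivity
  have hbound : Integrable (fun y : ℝ => (t^6)⁻¹ * (t^2+y^2)⁻¹) := by
    have : Integrable (fun y : ℝ => (t^2+y^2)⁻¹) := by
      have := (integrable_inv_one_add_sq).comp_div (R := t) ht.ne'
      apply (this.const_mul (t^2)⁻¹).congr ?_
      filter_upwards with y
      field_simp
    exact this.const_mul _
  apply hbound.mono' hcont.aestronglyMeasurable
  filter_upwards with y
  have hA : t^2 ≤ t^2+(y-a)^2 := by nlinarith [sq_nonneg (y-a)]
  have hB : (0:ℝ) < t^2+y^2 := by positivity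
  rw [Real.norm_eq_abs, abs_of_pos (by positivity)]
  rw [← mul_inv]
  apply inv_anti₀ (by positivity)
  have h1 : t^2*t^2 ≤ (t^2+(y-a)^2)*(t^2+(y-a)^2) := by nlinarith [sq_nonneg (y-a)]
  have h2 : t^2*(t^2+y^2) ≤ (t^2+y^2)*(t^2+y^2) := by nlinarith [sq_nonneg y]
  nlinarith [mul_le_mul h1 h2 (by positivity : (0:ℝ) ≤ t^2*(t^2+y^2)) (by positivity : (0:ℝ) ≤ (t^2+(y-a)^2)*(t^2+(y-a)^2))]


lemma lem_K (t a : ℝ) (ht : 0 < t) :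
    (∫ y : ℝ, ((t^2+(y-a)^2)^2 * (t^2+y^2)^2)⁻¹)
      = π * (20*t^2+a^2) / (t^3 * (4*t^2+a^2)^3) := by
  rcases eq_or_ne a 0 with rfl | ha
  · have hderiv : ∀ y : ℝ, HasDerivAt (fun y => FK0 t y)
        (((t^2+(y-(0:ℝ))^2)^2*(t^2+y^2)^2)⁻¹) y := by
      intro y
      simpa using hasDerivAt_FK0 ht y
    have hint := integrable_K (t := t) (a := 0) ht
    have htop := aux_FK0_tendsto ht (π/2) tendsto_abs_atTop_atTop (aux_arctan_atTop' ht)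
    have hbot := aux_FK0_tendsto ht (-(π/2)) tendsto_abs_atBot_atTop (aux_arctan_atBot' ht)
    rw [integral_of_hasDerivAt_of_tendsto hderiv hint hbot htop]
    have h7 : t^7 ≠ 0 := by positivity
    field_simp
    ring
  · have hderiv : ∀ y : ℝ, HasDerivAt (fun y => FK t a y)
        (((t^2+(y-a)^2)^2*(t^2+y^2)^2)⁻¹) y := fun y => hasDerivAt_FK ht ha y
    have hint := integrable_K (t := t) (a := a) ht
    have htop := aux_FK_tendsto (a := a) ht (π/2) tendsto_abs_atTop_atTop
      (aux_abs_sub_atTop a) (aux_arctan_atTop a ht) (aux_arctan_atTop' ht)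
    have hbot := aux_FK_tendsto (a := a) ht (-(π/2)) tendsto_abs_atBot_atTop
      (aux_abs_sub_atBot a) (aux_arctan_atBot a ht) (aux_arctan_atBot' ht)
    rw [integral_of_hasDerivAt_of_tendsto hderiv hint hbot htop]
    have hQ : (4*t^2+a^2) ≠ 0 := by positivity
    have h3 : t^3 ≠ 0 := by positivity
    field_simp
    ring

noncomputable def GR (a ρ : ℝ) : ℝ := -π/(Real.sqrt (1+ρ^2) * (4*(1+ρ^2)+a^2)^2)

lemma hasDerivAt_GR (a ρ : ℝ) :
    HasDerivAt (fun ρ => GR a ρ)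
      (ρ * (π * (20*(1+ρ^2)+a^2) / (Real.sqrt (1+ρ^2)^3 * (4*(1+ρ^2)+a^2)^3))) ρ := by
  have h1 : (0:ℝ) < 1+ρ^2 := by positivity
  set s := Real.sqrt (1+ρ^2) with hsdef
  have hs0 : 0 < s := Real.sqrt_pos.mpr h1
  have hs : s^2 = 1+ρ^2 := Real.sq_sqrt h1.le
  have hQ : (0:ℝ) < 4*(1+ρ^2)+a^2 := by positivity
  have dsq : HasDerivAt (fun ρ : ℝ => 1+ρ^2) (2*ρ) ρ := by
    simpa using ((hasDerivAt_id ρ).pow 2).const_add (1:ℝ)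
  have ds : HasDerivAt (fun ρ : ℝ => Real.sqrt (1+ρ^2)) (1/(2*s) * (2*ρ)) ρ := by
    exact (Real.hasDerivAt_sqrt h1.ne').comp ρ dsq
  have dQ : HasDerivAt (fun ρ : ℝ => (4*(1+ρ^2)+a^2)^2) (2*(4*(1+ρ^2)+a^2)*(4*(2*ρ))) ρ := by
    exact (((dsq.const_mul 4).add_const (a^2)).pow 2).congr_deriv (by ring)
  have dD : HasDerivAt (fun ρ : ℝ => Real.sqrt (1+ρ^2) * (4*(1+ρ^2)+a^2)^2)
      ((1/(2*s) * (2*ρ)) * (4*(1+ρ^2)+a^2)^2 + s * (2*(4*(1+ρ^2)+a^2)*(4*(2*ρ)))) ρ :=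
    ds.mul dQ
  have hD : s * (4*(1+ρ^2)+a^2)^2 ≠ 0 := by positivity
  have big := (hasDerivAt_const ρ (-π)).div dD hD
  simp only [GR]
  convert big using 1
  · rfl
  · rfl
  · rfl
  rw [← hs, Real.sqrt_sq hs0.le]
  have h2 : s^3 = s^2 * s := by ring
  field_simp
  ring

lemma GR_tendsto (a : ℝ) : Tendsto (fun ρ => GR a ρ) atTop (𝓝 0) := by
  apply squeeze_zero_norm' ?_ (by simpa using (tendsto_inv_atTop_zero (𝕜 := ℝ)).const_mul π)
  filter_upwards [eventually_ge_atTop 1] with ρ hρ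
  have h1 : (0:ℝ) < 1+ρ^2 := by positivity
  have hs1 : (1:ℝ) ≤ Real.sqrt (1+ρ^2) := Real.one_le_sqrt.mpr (by nlinarith)
  have hQ : (0:ℝ) < 4*(1+ρ^2)+a^2 := by positivity
  have hs0 : (0:ℝ) < Real.sqrt (1+ρ^2) := by positivity
  rw [GR, Real.norm_eq_abs, abs_div, abs_neg, abs_of_pos Real.pi_pos,
    abs_of_pos (by positivity : (0:ℝ) < Real.sqrt (1+ρ^2) * (4*(1+ρ^2)+a^2)^2),
    div_le_iff₀ (by positivity)]
  have : ρ ≤ Real.sqrt (1+ρ^2) * (4*(1+ρ^2)+a^2)^2 := by nlinarith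
  calc π = π * ρ * ρ⁻¹ := by field_simp
  _ ≤ π * (Real.sqrt (1+ρ^2) * (4*(1+ρ^2)+a^2)^2) * ρ⁻¹ := by
      apply mul_le_mul_of_nonneg_right ?_ (by positivity)
      exact mul_le_mul_of_nonneg_left this Real.pi_pos.le
  _ = π * ρ⁻¹ * (Real.sqrt (1+ρ^2) * (4*(1+ρ^2)+a^2)^2) := by ring

lemma lem_rho (a : ℝ) :
    (∫ ρ in Ioi (0:ℝ), ρ * (π * (20*(1+ρ^2)+a^2) / (Real.sqrt (1+ρ^2)^3 * (4*(1+ρ^2)+a^2)^3)))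
      = π/(4+a^2)^2 := by
  rw [integral_Ioi_of_hasDerivAt_of_nonneg' (fun x _ => hasDerivAt_GR a x)
    (fun x hx => by
      have : (0:ℝ) < x := hx
      have h1 : (0:ℝ) < 1+x^2 := by positivity
      positivity)
    (GR_tendsto a)]
  simp only [GR]
  norm_num
  ring

lemma lem_plane (a : ℝ) :
    (∫ v : ℝ × ℝ, π * (20*(1+v.1^2+v.2^2)+a^2) /
        (Real.sqrt (1+v.1^2+v.2^2)^3 * (4*(1+v.1^2+v.2^2)+a^2)^3))
      = 2*π*(π/(4+a^2)^2) := by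
  rw [← integral_comp_polarCoord_symm]
  have key : ∀ p : ℝ × ℝ, (1+(polarCoord.symm p).1^2+(polarCoord.symm p).2^2) = 1+p.1^2 := by
    intro p
    show 1+(p.1 * cos p.2)^2+(p.1 * sin p.2)^2 = 1+p.1^2
    have := sin_sq_add_cos_sq p.2
    nlinarith [this]
  simp only [key, smul_eq_mul]
  rw [show polarCoord.target = Ioi (0:ℝ) ×ˢ Ioo (-π) π from rfl, Measure.volume_eq_prod]
  have h := setIntegral_prod_mul (μ := volume) (ν := volume)
      (fun ρ : ℝ => ρ * (π * (20*(1+ρ^2)+a^2) / (Real.sqrt (1+ρ^2)^3 * (4*(1+ρ^2)+a^2)^3)))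
      (fun _ : ℝ => (1:ℝ)) (Ioi 0) (Ioo (-π) π)
  simp only [mul_one] at h
  rw [h, lem_rho a]
  have : (∫ _ in Ioo (-π) π, (1:ℝ)) = 2*π := by
    rw [setIntegral_const, measureReal_def, Real.volume_Ioo, smul_eq_mul, mul_one,
      ENNReal.toReal_ofReal (by nlinarith [Real.pi_pos] : (0:ℝ) ≤ π - -π)]
    ring
  rw [this]
  ring

lemma integrable_f3 (w : EuclideanSpace ℝ (Fin 3)) :
    Integrable (fun z : EuclideanSpace ℝ (Fin 3) => ((1+‖w-z‖^2)^2 * (1+‖z‖^2)^2)⁻¹) := by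
  have hcont : Continuous fun z : EuclideanSpace ℝ (Fin 3) =>
      ((1+‖w-z‖^2)^2 * (1+‖z‖^2)^2)⁻¹ := by
    apply Continuous.inv₀ (by continuity)
    intro z; positivity
  have hint : Integrable (fun z : EuclideanSpace ℝ (Fin 3) => 4*(1+‖z‖)^(-(4:ℝ))) := by
    apply Integrable.const_mul
    apply integrable_one_add_norm
    simp [finrank_euclideanSpace_fin]
    norm_num
  apply hint.mono' hcont.aestronglyMeasurable
  filter_upwards with z
  have h1 : (0:ℝ) < 1+‖w-z‖^2 := by positivity
  have h2 : (0:ℝ) < 1+‖z‖^2 := by positivity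
  have h3 : (0:ℝ) ≤ ‖z‖ := norm_nonneg z
  rw [Real.norm_eq_abs, abs_of_pos (by positivity), Real.rpow_neg (by positivity),
    show ((1:ℝ)+‖z‖)^(4:ℝ) = (1+‖z‖)^(4:ℕ) by rw [← Real.rpow_natCast]; norm_num]
  have h4 : (1+‖z‖)^2 ≤ 2*(1+‖z‖^2) := by nlinarith [sq_nonneg (1-‖z‖)]
  have key : (1+‖z‖)^4/4 ≤ (1+‖w-z‖^2)^2*(1+‖z‖^2)^2 := by
    nlinarith [sq_nonneg (‖w-z‖^2), sq_nonneg ‖z‖, sq_nonneg (1+‖z‖),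
      mul_le_mul h4 h4 (by positivity) (by positivity)]
  calc ((1+‖w-z‖^2)^2*(1+‖z‖^2)^2)⁻¹ ≤ ((1+‖z‖)^4/4)⁻¹ := by
        apply inv_anti₀ (by positivity) key
  _ = 4*((1+‖z‖)^4)⁻¹ := by rw [inv_div]; ring

lemma rot_step (w : EuclideanSpace ℝ (Fin 3)) :
    (∫ z : EuclideanSpace ℝ (Fin 3), ((1+‖w-z‖^2)^2 * (1+‖z‖^2)^2)⁻¹)
      = (∫ z : EuclideanSpace ℝ (Fin 3),
          ((1+‖(‖w‖ • EuclideanSpace.single (0 : Fin 3) (1:ℝ))-z‖^2)^2 * (1+‖z‖^2)^2)⁻¹) := by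
  set w₀ : EuclideanSpace ℝ (Fin 3) := ‖w‖ • EuclideanSpace.single (0 : Fin 3) (1:ℝ) with hw₀
  have hnorm : ‖w‖ = ‖w₀‖ := by
    rw [hw₀, norm_smul, EuclideanSpace.norm_single]
    simp [abs_of_nonneg (norm_nonneg w)]
  set T := Submodule.reflection (ℝ ∙ (w - w₀))ᗮ with hT
  have hTw : T w = w₀ := Submodule.reflection_sub hnorm
  have hmp : MeasurePreserving (T.toHomeomorph.toMeasurableEquiv) volume volume :=
    T.measurePreserving
  have := hmp.integral_comp' (f := T.toHomeomorph.toMeasurableEquiv)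
    (fun z => ((1+‖w-z‖^2)^2 * (1+‖z‖^2)^2)⁻¹)
  rw [← this]
  congr 1
  funext z
  have hz : (T.toHomeomorph.toMeasurableEquiv z) = T z := rfl
  rw [hz]
  have h1 : ‖w - T z‖ = ‖w₀ - z‖ := by
    have : w - T z = T (T w - z) := by
      rw [map_sub]
      rw [hT]
      rw [Submodule.reflection_reflection]
    rw [this, T.norm_map, hTw]
  rw [h1, T.norm_map]

noncomputable def eqv3 : (Fin 3 → ℝ) ≃ᵐ ℝ × (Fin 2 → ℝ) :=
  MeasurableEquiv.piFinSuccAbove (fun _ : Fin 3 => ℝ) 0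

lemma lem_R3 (w : EuclideanSpace ℝ (Fin 3)) :
    (∫ z : EuclideanSpace ℝ (Fin 3), ((1+‖w-z‖^2)^2 * (1+‖z‖^2)^2)⁻¹)
      = 2*π^2/((4+‖w‖^2)^2) := by
  rw [rot_step w]
  set r := ‖w‖ with hr
  set w₀ : EuclideanSpace ℝ (Fin 3) := r • EuclideanSpace.single (0 : Fin 3) (1:ℝ) with hw₀
  set f : EuclideanSpace ℝ (Fin 3) → ℝ :=
    fun z => ((1+‖w₀-z‖^2)^2 * (1+‖z‖^2)^2)⁻¹ with hf
  have hnorm3 : ∀ x : EuclideanSpace ℝ (Fin 3), ‖x‖^2 = (x 0)^2 + (x 1)^2 + (x 2)^2 := by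
    intro x
    rw [EuclideanSpace.norm_eq, Real.sq_sqrt (by positivity)]
    simp [Fin.sum_univ_three, sq_abs]
  set φ := (MeasurableEquiv.toLp 2 (Fin 3 → ℝ)).symm with hφ
  have vpφ : MeasurePreserving φ.symm volume volume :=
    (EuclideanSpace.volume_preserving_symm_measurableEquiv_toLp (Fin 3)).symm
  have vpe : MeasurePreserving (eqv3.symm) volume volume :=
    (volume_preserving_piFinSuccAbove (fun _ : Fin 3 => ℝ) 0).symm
  -- transport the integral
  rw [← vpφ.integral_comp' f, ← vpe.integral_comp' (fun p => f (φ.symm p))]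
  -- integrability for Fubini
  have hint : Integrable (fun q : ℝ × (Fin 2 → ℝ) => f (φ.symm (eqv3.symm q))) := by
    have h0 := integrable_f3 w₀
    have h1 : Integrable (fun p : Fin 3 → ℝ => f (φ.symm p)) volume := by
      rw [show (fun p : Fin 3 → ℝ => f (φ.symm p)) = f ∘ φ.symm from rfl,
        ← integrable_map_equiv φ.symm f, vpφ.map_eq]
      exact h0
    rw [show (fun q : ℝ × (Fin 2 → ℝ) => f (φ.symm (eqv3.symm q)))
        = (fun p : Fin 3 → ℝ => f (φ.symm p)) ∘ eqv3.symm from rfl,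
      ← integrable_map_equiv eqv3.symm _, vpe.map_eq]
    exact h1
  rw [Measure.volume_eq_prod] at hint ⊢
  rw [integral_prod_symm _ hint]
  -- coordinates of the composite
  have coord : ∀ (y : ℝ) (v : Fin 2 → ℝ),
      f (φ.symm (eqv3.symm (y, v)))
        = ((1+((r-y)^2+(v 0)^2+(v 1)^2))^2 * (1+(y^2+(v 0)^2+(v 1)^2))^2)⁻¹ := by
    intro y v
    have e0 : (eqv3.symm (y, v)) 0 = y := by simp [eqv3, MeasurableEquiv.piFinSuccAbove]
    have e1 : (eqv3.symm (y, v)) 1 = v 0 := by simp [eqv3, MeasurableEquiv.piFinSuccAbove]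
    have e2 : (eqv3.symm (y, v)) 2 = v 1 := by
      simp [eqv3, MeasurableEquiv.piFinSuccAbove]
      rw [show (2 : Fin 3) = Fin.succ 1 from rfl, Fin.cons_succ]
    set p := eqv3.symm (y, v)
    have hz : ∀ i, (φ.symm p) i = p i := fun _ => rfl
    have c1 : ‖φ.symm p‖^2 = y^2+(v 0)^2+(v 1)^2 := by
      rw [hnorm3, hz, hz, hz, e0, e1, e2]
    have c2 : ‖w₀ - φ.symm p‖^2 = (r-y)^2+(v 0)^2+(v 1)^2 := by
      rw [hnorm3]
      have d0 : (w₀ - φ.symm p) 0 = r - y := by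
        simp [hw₀, PiLp.sub_apply, PiLp.smul_apply, EuclideanSpace.single_apply,
          hz, e0]
      have d1 : (w₀ - φ.symm p) 1 = -(v 0) := by
        simp [hw₀, PiLp.sub_apply, PiLp.smul_apply, EuclideanSpace.single_apply,
          hz, e1]
      have d2 : (w₀ - φ.symm p) 2 = -(v 1) := by
        simp [hw₀, PiLp.sub_apply, PiLp.smul_apply, EuclideanSpace.single_apply,
          hz, e2]
      rw [d0, d1, d2]
      ring
    rw [hf]
    simp only [c1, c2]
  -- inner integral
  have inner : ∀ v : Fin 2 → ℝ,
      (∫ y : ℝ, f (φ.symm (eqv3.symm (y, v))))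
        = π * (20*(1+(v 0)^2+(v 1)^2)+r^2) /
            (Real.sqrt (1+(v 0)^2+(v 1)^2)^3 * (4*(1+(v 0)^2+(v 1)^2)+r^2)^3) := by
    intro v
    have h1 : (0:ℝ) < 1+(v 0)^2+(v 1)^2 := by positivity
    have ht : (0:ℝ) < Real.sqrt (1+(v 0)^2+(v 1)^2) := Real.sqrt_pos.mpr h1
    have hK := lem_K (Real.sqrt (1+(v 0)^2+(v 1)^2)) r ht
    rw [Real.sq_sqrt h1.le] at hK
    have : (∫ y : ℝ, f (φ.symm (eqv3.symm (y, v))))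
        = ∫ y : ℝ, (((1+(v 0)^2+(v 1)^2)+(y-r)^2)^2 * ((1+(v 0)^2+(v 1)^2)+y^2)^2)⁻¹ := by
      congr 1
      funext y
      rw [coord y v]
      congr 1
      ring
    rw [this, hK]
  rw [show (∫ (v : Fin 2 → ℝ) (y : ℝ), f (φ.symm (eqv3.symm (y, v))))
      = ∫ v : Fin 2 → ℝ, π * (20*(1+(v 0)^2+(v 1)^2)+r^2) /
          (Real.sqrt (1+(v 0)^2+(v 1)^2)^3 * (4*(1+(v 0)^2+(v 1)^2)+r^2)^3) from by
    congr 1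
    funext v
    exact inner v]
  have vp2 : MeasurePreserving (MeasurableEquiv.finTwoArrow (α := ℝ)).symm volume volume :=
    (volume_preserving_finTwoArrow ℝ).symm
  rw [← vp2.integral_comp' (fun v : Fin 2 → ℝ => π * (20*(1+(v 0)^2+(v 1)^2)+r^2) /
      (Real.sqrt (1+(v 0)^2+(v 1)^2)^3 * (4*(1+(v 0)^2+(v 1)^2)+r^2)^3))]
  have coord2 : ∀ u : ℝ × ℝ, ((MeasurableEquiv.finTwoArrow (α := ℝ)).symm u) 0 = u.1 ∧
      ((MeasurableEquiv.finTwoArrow (α := ℝ)).symm u) 1 = u.2 := by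
    intro u
    constructor <;> simp [MeasurableEquiv.finTwoArrow]
  rw [show (∫ u : ℝ × ℝ, π * (20*(1+((MeasurableEquiv.finTwoArrow (α := ℝ)).symm u 0)^2
        +((MeasurableEquiv.finTwoArrow (α := ℝ)).symm u 1)^2)+r^2) /
      (Real.sqrt (1+((MeasurableEquiv.finTwoArrow (α := ℝ)).symm u 0)^2
        +((MeasurableEquiv.finTwoArrow (α := ℝ)).symm u 1)^2)^3
        * (4*(1+((MeasurableEquiv.finTwoArrow (α := ℝ)).symm u 0)^2
        +((MeasurableEquiv.finTwoArrow (α := ℝ)).symm u 1)^2)+r^2)^3))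
      = ∫ u : ℝ × ℝ, π * (20*(1+u.1^2+u.2^2)+r^2) /
      (Real.sqrt (1+u.1^2+u.2^2)^3 * (4*(1+u.1^2+u.2^2)+r^2)^3) from by
    exact congrArg (integral volume) (funext fun u => by
      rw [(coord2 u).1, (coord2 u).2])]
  rw [lem_plane r]
  ring

theorem stmt_2 (b c : ℝ) (hb : 0 < b) (hc : 0 < c)
    (u : EuclideanSpace ℝ (Fin 3) → ℝ)
    (hu : ∀ x, u x = c / (1 + b ^ 2 * ‖x‖ ^ 2) ^ 2) :
    ∀ x, (∫ y, u (x - y) * u y)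
      = 2 * π ^ 2 * c ^ 2 / (b ^ 3 * (4 + b ^ 2 * ‖x‖ ^ 2) ^ 2) := by
  intro x
  set g : EuclideanSpace ℝ (Fin 3) → ℝ :=
    fun z => ((1+‖(b • x)-z‖^2)^2 * (1+‖z‖^2)^2)⁻¹ with hg
  have step1 : (∫ y, u (x - y) * u y) = c^2 * ∫ y, g (b • y) := by
    rw [← integral_const_mul]
    apply congrArg (integral volume)
    funext y
    rw [hu, hu, hg]
    have n1 : ‖(b • x) - (b • y)‖^2 = b^2*‖x-y‖^2 := by
      rw [← smul_sub, norm_smul, Real.norm_eq_abs, mul_pow, sq_abs]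
    have n2 : ‖b • y‖^2 = b^2*‖y‖^2 := by
      rw [norm_smul, Real.norm_eq_abs, mul_pow, sq_abs]
    simp only [n1, n2]
    have d1 : (0:ℝ) < 1 + b^2*‖x-y‖^2 := by positivity
    have d2 : (0:ℝ) < 1 + b^2*‖y‖^2 := by positivity
    field_simp
  rw [step1, MeasureTheory.Measure.integral_comp_smul volume g b, lem_R3 (b • x)]
  have hfr : Module.finrank ℝ (EuclideanSpace ℝ (Fin 3)) = 3 := finrank_euclideanSpace_fin
  rw [hfr]
  have n3 : ‖b • x‖^2 = b^2*‖x‖^2 := by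
    rw [norm_smul, Real.norm_eq_abs, mul_pow, sq_abs]
  rw [n3, abs_of_pos (by positivity : (0:ℝ) < (b^3)⁻¹), smul_eq_mul]
  have d3 : (0:ℝ) < 4 + b^2*‖x‖^2 := by positivity
  field_simp
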